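/- Fix p ∈ ℕ, p ≥ 1, and let u : ℤ → ℝ satisfy u(n+k) > 0 and u(n−k) > 0 for k = 1, …, p−1 at a given site n. Then lim_{ε → 0⁺} ε^{p+2} (1 + ε^{-2} u(n)²) [ ε^{-1} u(n+p) Π_{k=1}^{p−1} √(1 + ε^{-2} u(n+k)²) − ε^{-1} u(n−p) Π_{k=1}^{p−1} √(1 + ε^{-2} u(n−k)²) ] = u(n)² ( Π_{k=1}^{p} u(n+k) − Π_{k=1}^{p} u(n−k) ). That is, under the rescaling u_k → ε^{-1} u_k, t → ε^{p+1} t, the equation u_t = (1+u²)( u_p Π_{k=1}^{p−1} √(1+u_k²) − u_{−p} Π_{k=1}^{p−1} √(1+u_{−k}²) ) degenerates as ε → 0 into the modified Narita–Itoh–Bogoyavlensky equation u_t = u² ( Π_{k=1}^{p} u_k − Π_{k=1}^{p} u_{−k} ). -/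

import Mathlib

open Filter

/-- Under the rescaling `u_k → ε⁻¹ u_k`, `t → ε^{p+1} t`, the integrable deformation
`u_t = (1+u²)( u_p Π_{k=1}^{p−1} √(1+u_k²) − u_{−p} Π_{k=1}^{p−1} √(1+u_{−k}²) )`
degenerates as `ε → 0⁺` into the modified Narita–Itoh–Bogoyavlensky equation
`u_t = u²( Π_{k=1}^{p} u_k − Π_{k=1}^{p} u_{−k} )`. -/
theorem rescaling_limit_to_mNIB (p : ℕ) (hp : 1 ≤ p) (u : ℤ → ℝ) (n : ℤ)
    (hpos : ∀ k : ℕ, 1 ≤ k → k ≤ p - 1 → 0 < u (n + k) ∧ 0 < u (n - k)) :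
    Tendsto (fun ε : ℝ =>
        ε^(p+2) * (1 + ε⁻¹^2 * (u n)^2) *
          (ε⁻¹ * u (n + p) *
              ∏ k ∈ Finset.Icc 1 (p-1), Real.sqrt (1 + ε⁻¹^2 * (u (n + k))^2)
            - ε⁻¹ * u (n - p) *
                ∏ k ∈ Finset.Icc 1 (p-1), Real.sqrt (1 + ε⁻¹^2 * (u (n - k))^2)))
      (nhdsWithin 0 (Set.Ioi 0))
      (nhds ((u n)^2 *
        (∏ k ∈ Finset.Icc 1 p, u (n + k) - ∏ k ∈ Finset.Icc 1 p, u (n - k)))) := by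
  obtain ⟨q, rfl⟩ : ∃ q, p = q + 1 := ⟨p - 1, (Nat.succ_pred_eq_of_pos hp).symm⟩
  set F : ℝ → ℝ := fun ε =>
    (ε^2 + (u n)^2) *
      (u (n + (q+1 : ℕ)) * ∏ k ∈ Finset.Icc 1 q, Real.sqrt (ε^2 + (u (n + k))^2)
        - u (n - (q+1 : ℕ)) * ∏ k ∈ Finset.Icc 1 q, Real.sqrt (ε^2 + (u (n - k))^2))
    with hF
  have hFcont : Continuous F := by
    apply Continuous.mul
    · fun_prop
    · apply Continuous.sub <;> apply Continuous.mul
      · fun_prop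
      · exact continuous_finset_prod _ fun k _ => by
          exact Real.continuous_sqrt.comp (by fun_prop)
      · fun_prop
      · exact continuous_finset_prod _ fun k _ => by
          exact Real.continuous_sqrt.comp (by fun_prop)
  have hF0 : F 0 = (u n)^2 *
      (∏ k ∈ Finset.Icc 1 (q+1), u (n + k) - ∏ k ∈ Finset.Icc 1 (q+1), u (n - k)) := by
    simp only [hF]
    have h1 : ∀ k ∈ Finset.Icc 1 q, Real.sqrt ((0:ℝ)^2 + (u (n + k))^2) = u (n + k) := by
      intro k hk
      rw [Finset.mem_Icc] at hk
      have := (hpos k hk.1 (by simpa using hk.2)).1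
      rw [zero_pow (by norm_num), zero_add, Real.sqrt_sq this.le]
    have h2 : ∀ k ∈ Finset.Icc 1 q, Real.sqrt ((0:ℝ)^2 + (u (n - k))^2) = u (n - k) := by
      intro k hk
      rw [Finset.mem_Icc] at hk
      have := (hpos k hk.1 (by simpa using hk.2)).2
      rw [zero_pow (by norm_num), zero_add, Real.sqrt_sq this.le]
    rw [Finset.prod_congr rfl h1, Finset.prod_congr rfl h2,
      Finset.prod_Icc_succ_top (Nat.le_add_left 1 q),
      Finset.prod_Icc_succ_top (Nat.le_add_left 1 q)]
    ring
  have hT : Tendsto F (nhdsWithin 0 (Set.Ioi 0)) (nhds ((u n)^2 *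
      (∏ k ∈ Finset.Icc 1 (q+1), u (n + k) - ∏ k ∈ Finset.Icc 1 (q+1), u (n - k)))) := by
    rw [← hF0]
    exact (hFcont.tendsto 0).mono_left nhdsWithin_le_nhds
  refine hT.congr' ?_
  filter_upwards [self_mem_nhdsWithin] with ε (hε : (0:ℝ) < ε)
  have hεne : ε ≠ 0 := hε.ne'
  have hsq : ∀ a : ℝ, Real.sqrt (1 + ε⁻¹^2 * a^2) = ε⁻¹ * Real.sqrt (ε^2 + a^2) := by
    intro a
    have : 1 + ε⁻¹^2 * a^2 = ε⁻¹^2 * (ε^2 + a^2) := by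
      field_simp
    rw [this, Real.sqrt_mul (sq_nonneg _), Real.sqrt_sq (by positivity)]
  have hprod1 : ∏ k ∈ Finset.Icc 1 ((q+1)-1), Real.sqrt (1 + ε⁻¹^2 * (u (n + k))^2)
      = ε⁻¹^q * ∏ k ∈ Finset.Icc 1 q, Real.sqrt (ε^2 + (u (n + k))^2) := by
    simp only [Nat.add_sub_cancel, hsq, Finset.prod_mul_distrib,
      Finset.prod_const, Nat.card_Icc, Nat.add_sub_cancel]
  have hprod2 : ∏ k ∈ Finset.Icc 1 ((q+1)-1), Real.sqrt (1 + ε⁻¹^2 * (u (n - k))^2)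
      = ε⁻¹^q * ∏ k ∈ Finset.Icc 1 q, Real.sqrt (ε^2 + (u (n - k))^2) := by
    simp only [Nat.add_sub_cancel, hsq, Finset.prod_mul_distrib,
      Finset.prod_const, Nat.card_Icc, Nat.add_sub_cancel]
  simp only [hF]
  simp only [hprod1, hprod2]
  field_simp
  have hq : ε ^ q * ε⁻¹ ^ q = 1 := by rw [← mul_pow, mul_inv_cancel₀ hεne, one_pow]
  linear_combination (ε ^ 3 * u (n - ((q + 1 : ℕ) : ℤ)) * ∏ x ∈ Finset.Icc 1 q, Real.sqrt (ε ^ 2 + u (n - (x : ℤ)) ^ 2) - ε ^ 3 * u (n + ((q + 1 : ℕ) : ℤ)) * ∏ x ∈ Finset.Icc 1 q, Real.sqrt (ε ^ 2 + u (n + (x : ℤ)) ^ 2)) * hq
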